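/- (Lemma 7.) Let p, q, s be integers with 3 ≤ p < q, s ≥ 1, gcd(p,q) = gcd(s,pq) = 1, and set r = pq + s. Let m be an integer with m < pqr, and set I'₁ = (m−s−q−p, m−s−q] ∩ ℤ and I'₂ = (m−s−p, m−s] ∩ ℤ, and Σ₁ = σ_s(m) − σ_s(m−p) − σ_s(m−q) + σ_s(m−q−p). Then I'₁ ∪ I'₂ contains at most one multiple of r, and: if I'₁ ∪ I'₂ contains no multiple of r then a_m = Σ₁; if a multiple αr of r lies in I'₁ then a_m = Σ₁ − χ(αr); and if a multiple αr of r lies in I'₂ then a_m = Σ₁ + χ(αr); here a_m is the m-th coefficient of Q_{p,q,r} (interpreted as 0 for m < 0 or m > (p−1)(q−1)(r−1)) and χ = χ_{p,q,r}. -/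

import Mathlib

open Polynomial Classical

/-- Denominator `(X^{pq}-1)(X^{qr}-1)(X^{rp}-1)(X-1)` of the ternary
inclusion-exclusion polynomial. -/
noncomputable def incexcD (p q r : ℕ) : Polynomial ℤ :=
  (X ^ (p * q) - 1) * (X ^ (q * r) - 1) * (X ^ (r * p) - 1) * (X - 1)

/-- Numerator `(X^{pqr}-1)(X^p-1)(X^q-1)(X^r-1)` of the ternary
inclusion-exclusion polynomial. -/
noncomputable def incexcN (p q r : ℕ) : Polynomial ℤ :=
  (X ^ (p * q * r) - 1) * (X ^ p - 1) * (X ^ q - 1) * (X ^ r - 1)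

/-- The coefficient of a polynomial at an integer index, interpreted as `0`
for negative indices (and automatically `0` beyond the degree). -/
noncomputable def coeffZ (Q : Polynomial ℤ) (m : ℤ) : ℤ :=
  if 0 ≤ m then Q.coeff m.toNat else 0

/-- `chi p q r n = 1` if `n` is `{p,q,r}`-representable, i.e. if in the unique
representation `n = x·qr + y·rp + z·pq + δ·pqr` with `0 ≤ x < p`, `0 ≤ y < q`,
`0 ≤ z < r`, the integer `δ` is nonnegative; `chi p q r n = 0` otherwise. -/
noncomputable def chi (p q r : ℕ) (n : ℤ) : ℤ :=
  if ∃ x y z δ : ℤ, 0 ≤ x ∧ x < p ∧ 0 ≤ y ∧ y < q ∧ 0 ≤ z ∧ z < r ∧ 0 ≤ δ ∧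
      n = x * q * r + y * r * p + z * p * q + δ * p * q * r
  then 1 else 0

/-- The summatory function `σ_k(m) = Σ_{m-k < n ≤ m} chi p q r n`. -/
noncomputable def sigmaSum (p q r k : ℕ) (m : ℤ) : ℤ :=
  ∑ i ∈ Finset.range k, chi p q r (m - i)

/-- The sum `Σ₁ = σ_s(m) − σ_s(m−p) − σ_s(m−q) + σ_s(m−q−p)`. -/
noncomputable def SigmaOne (p q r s : ℕ) (m : ℤ) : ℤ :=
  sigmaSum p q r s m - sigmaSum p q r s (m - p) - sigmaSum p q r s (m - q) +
    sigmaSum p q r s (m - q - p)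



/-- `n = x·qr + y·rp + z·pq + δ·pqr` with digits in range (δ unconstrained). -/
def IsRep (p q r : ℕ) (n x y z δ : ℤ) : Prop :=
  0 ≤ x ∧ x < p ∧ 0 ≤ y ∧ y < q ∧ 0 ≤ z ∧ z < r ∧
    n = x * q * r + y * r * p + z * p * q + δ * p * q * r

lemma isRep_unique {p q r : ℕ} (hp : 0 < p) (hq : 0 < q) (hr : 0 < r)
    (hpq : Nat.Coprime p q) (hpr : Nat.Coprime p r) (hqr : Nat.Coprime q r)
    {n x y z δ x' y' z' δ' : ℤ}
    (h : IsRep p q r n x y z δ) (h' : IsRep p q r n x' y' z' δ') :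
    x = x' ∧ y = y' ∧ z = z' ∧ δ = δ' := by
  obtain ⟨hx0, hxp, hy0, hyq, hz0, hzr, he⟩ := h
  obtain ⟨hx0', hxp', hy0', hyq', hz0', hzr', he'⟩ := h'
  have cpq : IsCoprime (p:ℤ) q := Nat.isCoprime_iff_coprime.mpr hpq
  have cpr : IsCoprime (p:ℤ) r := Nat.isCoprime_iff_coprime.mpr hpr
  have cqr : IsCoprime (q:ℤ) r := Nat.isCoprime_iff_coprime.mpr hqr
  have hp' : (0:ℤ) < p := by exact_mod_cast hp
  have hq' : (0:ℤ) < q := by exact_mod_cast hq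
  have hr' : (0:ℤ) < r := by exact_mod_cast hr
  have hx : x = x' := by
    have hd : (p:ℤ) ∣ (x - x') * (q * r) :=
      ⟨(y' - y) * r + (z' - z) * q + (δ' - δ) * (q * r), by linear_combination he' - he⟩
    have hdx : (p:ℤ) ∣ (x - x') := (cpq.mul_right cpr).dvd_of_dvd_mul_right hd
    have := Int.eq_zero_of_abs_lt_dvd hdx (abs_lt.mpr ⟨by linarith, by linarith⟩)
    linarith
  have hy : y = y' := by
    have hd : (q:ℤ) ∣ (y - y') * (r * p) :=
      ⟨(x' - x) * r + (z' - z) * p + (δ' - δ) * (p * r), by linear_combination he' - he⟩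
    have hdy : (q:ℤ) ∣ (y - y') := (cqr.mul_right cpq.symm).dvd_of_dvd_mul_right hd
    have := Int.eq_zero_of_abs_lt_dvd hdy (abs_lt.mpr ⟨by linarith, by linarith⟩)
    linarith
  have hz : z = z' := by
    have hd : (r:ℤ) ∣ (z - z') * (p * q) :=
      ⟨(x' - x) * q + (y' - y) * p + (δ' - δ) * (p * q), by linear_combination he' - he⟩
    have hdz : (r:ℤ) ∣ (z - z') := (cpr.symm.mul_right cqr.symm).dvd_of_dvd_mul_right hd
    have := Int.eq_zero_of_abs_lt_dvd hdz (abs_lt.mpr ⟨by linarith, by linarith⟩)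
    linarith
  refine ⟨hx, hy, hz, ?_⟩
  have h0 : (δ - δ') * ((p:ℤ) * q * r) = 0 := by
    subst hx hy hz; linear_combination he' - he
  have hne : ((p:ℤ) * q * r) ≠ 0 := by positivity
  have := mul_eq_zero.mp h0
  rcases this with h | h
  · linarith
  · exact absurd h hne

lemma exists_reduce (a m n : ℤ) (hm : 0 < m) (h : IsCoprime a m) :
    ∃ x : ℤ, 0 ≤ x ∧ x < m ∧ m ∣ n - x * a := by
  obtain ⟨u, v, huv⟩ := h
  refine ⟨n * u % m, Int.emod_nonneg _ (ne_of_gt hm), Int.emod_lt_of_pos _ hm,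
    ⟨n * v + n * u / m * a, ?_⟩⟩
  rw [Int.emod_def]
  linear_combination (-n) * huv

lemma exists_isRep {p q r : ℕ} (hp : 0 < p) (hq : 0 < q) (hr : 0 < r)
    (hpq : Nat.Coprime p q) (hpr : Nat.Coprime p r) (hqr : Nat.Coprime q r)
    (n : ℤ) : ∃ x y z δ : ℤ, IsRep p q r n x y z δ := by
  have cpq : IsCoprime (p:ℤ) q := Nat.isCoprime_iff_coprime.mpr hpq
  have cpr : IsCoprime (p:ℤ) r := Nat.isCoprime_iff_coprime.mpr hpr
  have cqr : IsCoprime (q:ℤ) r := Nat.isCoprime_iff_coprime.mpr hqr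
  have hp' : (0:ℤ) < p := by exact_mod_cast hp
  have hq' : (0:ℤ) < q := by exact_mod_cast hq
  have hr' : (0:ℤ) < r := by exact_mod_cast hr
  obtain ⟨x, hx0, hxp, k1, hk1⟩ :=
    exists_reduce ((q:ℤ) * r) p n hp' (cpq.mul_right cpr).symm
  obtain ⟨y, hy0, hyq, k2, hk2⟩ :=
    exists_reduce ((r:ℤ) * p) q (n - x * ((q:ℤ) * r)) hq' (cqr.mul_right cpq.symm).symm
  obtain ⟨z, hz0, hzr, k3, hk3⟩ :=
    exists_reduce ((p:ℤ) * q) r (n - x * ((q:ℤ) * r) - y * ((r:ℤ) * p)) hr'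
      (cpr.symm.mul_right cqr.symm).symm
  have hdp : (p:ℤ) ∣ n - x * ((q:ℤ) * r) - y * ((r:ℤ) * p) - z * ((p:ℤ) * q) :=
    ⟨k1 - y * r - z * q, by linear_combination hk1⟩
  have hdq : (q:ℤ) ∣ n - x * ((q:ℤ) * r) - y * ((r:ℤ) * p) - z * ((p:ℤ) * q) :=
    ⟨k2 - z * p, by linear_combination hk2⟩
  have hdr : (r:ℤ) ∣ n - x * ((q:ℤ) * r) - y * ((r:ℤ) * p) - z * ((p:ℤ) * q) := ⟨k3, hk3⟩
  have hdpq : ((p:ℤ) * q) ∣ _ := cpq.mul_dvd hdp hdq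
  have hdpqr : ((p:ℤ) * q * r) ∣ n - x * ((q:ℤ) * r) - y * ((r:ℤ) * p) - z * ((p:ℤ) * q) :=
    (cpr.mul_left cqr).mul_dvd hdpq hdr
  obtain ⟨δ, hδ⟩ := hdpqr
  exact ⟨x, y, z, δ, hx0, hxp, hy0, hyq, hz0, hzr, by linear_combination hδ⟩

structure RepSys (p q r : ℕ) (xf yf zf df : ℤ → ℤ) : Prop where
  hp : 0 < p
  hq : 0 < q
  hr : 0 < r
  hpq : Nat.Coprime p q
  hpr : Nat.Coprime p r
  hqr : Nat.Coprime q r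
  hrep : ∀ n, IsRep p q r n (xf n) (yf n) (zf n) (df n)

def chiHatF (df : ℤ → ℤ) (n : ℤ) : ℤ := if 0 ≤ df n then df n + 1 else 0
def psi2F (zf df : ℤ → ℤ) (n : ℤ) : ℤ := if zf n = 0 ∧ 0 ≤ df n then 1 else 0
def psi1F (yf zf df : ℤ → ℤ) (n : ℤ) : ℤ :=
  if yf n = 0 ∧ zf n = 0 ∧ df n = 0 then 1 else 0
def eF (zf df : ℤ → ℤ) (n : ℤ) : ℤ := if zf n = 0 ∧ df n = 0 then 1 else 0

namespace RepSys

variable {p q r : ℕ} {xf yf zf df : ℤ → ℤ} (H : RepSys p q r xf yf zf df)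
include H

lemma rep_eq {n x y z δ : ℤ} (h : IsRep p q r n x y z δ) :
    xf n = x ∧ yf n = y ∧ zf n = z ∧ df n = δ :=
  isRep_unique H.hp H.hq H.hr H.hpq H.hpr H.hqr (H.hrep n) h

lemma hp' : (0:ℤ) < p := by exact_mod_cast H.hp
lemma hq' : (0:ℤ) < q := by exact_mod_cast H.hq
lemma hr' : (0:ℤ) < r := by exact_mod_cast H.hr

lemma chi_eq (n : ℤ) : chi p q r n = if 0 ≤ df n then 1 else 0 := by
  obtain ⟨hx0, hxp, hy0, hyq, hz0, hzr, he⟩ := H.hrep n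
  by_cases hd : 0 ≤ df n
  · have hex : ∃ x y z δ : ℤ, 0 ≤ x ∧ x < p ∧ 0 ≤ y ∧ y < q ∧ 0 ≤ z ∧ z < r ∧ 0 ≤ δ ∧
        n = x * q * r + y * r * p + z * p * q + δ * p * q * r :=
      ⟨xf n, yf n, zf n, df n, hx0, hxp, hy0, hyq, hz0, hzr, hd, he⟩
    unfold chi
    rw [if_pos hex, if_pos hd]
  · have hex : ¬ ∃ x y z δ : ℤ, 0 ≤ x ∧ x < p ∧ 0 ≤ y ∧ y < q ∧ 0 ≤ z ∧ z < r ∧ 0 ≤ δ ∧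
        n = x * q * r + y * r * p + z * p * q + δ * p * q * r := by
      rintro ⟨x, y, z, δ, h1, h2, h3, h4, h5, h6, h7, h8⟩
      have := (H.rep_eq ⟨h1, h2, h3, h4, h5, h6, h8⟩).2.2.2
      omega
    unfold chi
    rw [if_neg hex, if_neg hd]

lemma nonneg_of_df (n : ℤ) (hd : 0 ≤ df n) : 0 ≤ n := by
  obtain ⟨hx0, hxp, hy0, hyq, hz0, hzr, he⟩ := H.hrep n
  have t1 : 0 ≤ xf n * q * r := by
    exact mul_nonneg (mul_nonneg hx0 H.hq'.le) H.hr'.le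
  have t2 : 0 ≤ yf n * r * p := mul_nonneg (mul_nonneg hy0 H.hr'.le) H.hp'.le
  have t3 : 0 ≤ zf n * p * q := mul_nonneg (mul_nonneg hz0 H.hp'.le) H.hq'.le
  have t4 : 0 ≤ df n * p * q * r := by
    have : 0 ≤ df n * p := mul_nonneg hd H.hp'.le
    exact mul_nonneg (mul_nonneg this H.hq'.le) H.hr'.le
  linarith

lemma df_neg (n : ℤ) (hn : n < 0) : ¬ 0 ≤ df n := fun hd => by
  have := H.nonneg_of_df n hd; omega

lemma df_le_zero (n : ℤ) (hn : n < (p:ℤ) * q * r) : df n ≤ 0 := by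
  by_contra hd
  push_neg at hd
  obtain ⟨hx0, hxp, hy0, hyq, hz0, hzr, he⟩ := H.hrep n
  have t1 : 0 ≤ xf n * q * r := mul_nonneg (mul_nonneg hx0 H.hq'.le) H.hr'.le
  have t2 : 0 ≤ yf n * r * p := mul_nonneg (mul_nonneg hy0 H.hr'.le) H.hp'.le
  have t3 : 0 ≤ zf n * p * q := mul_nonneg (mul_nonneg hz0 H.hp'.le) H.hq'.le
  have hpqr : (0:ℤ) < (p:ℤ) * q * r := mul_pos (mul_pos H.hp' H.hq') H.hr'
  have t4 : (1:ℤ) * ((p:ℤ) * q * r) ≤ df n * ((p:ℤ) * q * r) :=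
    mul_le_mul_of_nonneg_right hd hpqr.le
  nlinarith

lemma chiHat_eq_chi (n : ℤ) (hn : n < (p:ℤ) * q * r) : chiHatF df n = chi p q r n := by
  rw [H.chi_eq n]
  have := H.df_le_zero n hn
  unfold chiHatF
  split_ifs <;> omega

lemma L1 (n : ℤ) : chiHatF df n - chiHatF df (n - (p:ℤ) * q) = psi2F zf df n := by
  obtain ⟨hx0, hxp, hy0, hyq, hz0, hzr, he⟩ := H.hrep n
  rcases eq_or_lt_of_le hz0 with hz | hz
  · have h2 : IsRep p q r (n - (p:ℤ) * q) (xf n) (yf n) ((r:ℤ) - 1) (df n - 1) :=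
      ⟨hx0, hxp, hy0, hyq, by linarith [H.hr'], by linarith, by linear_combination he - ((p:ℤ)*q) * hz⟩
    obtain ⟨_, _, hz2, hd2⟩ := H.rep_eq h2
    unfold chiHatF psi2F
    rw [hd2]
    split_ifs <;> omega
  · have h2 : IsRep p q r (n - (p:ℤ) * q) (xf n) (yf n) (zf n - 1) (df n) :=
      ⟨hx0, hxp, hy0, hyq, by linarith, by linarith, by linear_combination he⟩
    obtain ⟨_, _, hz2, hd2⟩ := H.rep_eq h2
    unfold chiHatF psi2F
    rw [hd2]
    split_ifs <;> omega

lemma L0 (n : ℤ) : chi p q r n - chi p q r (n - (p:ℤ) * q) = eF zf df n := by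
  obtain ⟨hx0, hxp, hy0, hyq, hz0, hzr, he⟩ := H.hrep n
  rw [H.chi_eq, H.chi_eq]
  rcases eq_or_lt_of_le hz0 with hz | hz
  · have h2 : IsRep p q r (n - (p:ℤ) * q) (xf n) (yf n) ((r:ℤ) - 1) (df n - 1) :=
      ⟨hx0, hxp, hy0, hyq, by linarith [H.hr'], by linarith, by linear_combination he - ((p:ℤ)*q) * hz⟩
    obtain ⟨_, _, hz2, hd2⟩ := H.rep_eq h2
    unfold eF
    rw [hd2]
    split_ifs <;> omega
  · have h2 : IsRep p q r (n - (p:ℤ) * q) (xf n) (yf n) (zf n - 1) (df n) :=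
      ⟨hx0, hxp, hy0, hyq, by linarith, by linarith, by linear_combination he⟩
    obtain ⟨_, _, hz2, hd2⟩ := H.rep_eq h2
    unfold eF
    rw [hd2]
    split_ifs <;> omega

lemma L2 (n : ℤ) : psi2F zf df n - psi2F zf df (n - (r:ℤ) * p) = psi1F yf zf df n := by
  obtain ⟨hx0, hxp, hy0, hyq, hz0, hzr, he⟩ := H.hrep n
  rcases eq_or_lt_of_le hy0 with hy | hy
  · have h2 : IsRep p q r (n - (r:ℤ) * p) (xf n) ((q:ℤ) - 1) (zf n) (df n - 1) :=
      ⟨hx0, hxp, by linarith [H.hq'], by linarith, hz0, hzr, by linear_combination he - ((r:ℤ)*p) * hy⟩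
    obtain ⟨_, hy2, hz2, hd2⟩ := H.rep_eq h2
    unfold psi2F psi1F
    rw [hd2, hz2]
    split_ifs <;> omega
  · have h2 : IsRep p q r (n - (r:ℤ) * p) (xf n) (yf n - 1) (zf n) (df n) :=
      ⟨hx0, hxp, by linarith, by linarith, hz0, hzr, by linear_combination he⟩
    obtain ⟨_, hy2, hz2, hd2⟩ := H.rep_eq h2
    unfold psi2F psi1F
    rw [hd2, hz2]
    split_ifs <;> omega

lemma rep_zero : xf 0 = 0 ∧ yf 0 = 0 ∧ zf 0 = 0 ∧ df 0 = 0 :=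
  H.rep_eq ⟨le_refl 0, H.hp', le_refl 0, H.hq', le_refl 0, H.hr', by ring⟩

lemma rep_pqr : xf ((p:ℤ)*q*r) = 0 ∧ yf ((p:ℤ)*q*r) = 0 ∧ zf ((p:ℤ)*q*r) = 0 ∧
    df ((p:ℤ)*q*r) = 1 :=
  H.rep_eq ⟨le_refl 0, H.hp', le_refl 0, H.hq', le_refl 0, H.hr', by ring⟩

lemma L3 (n : ℤ) : psi1F yf zf df n - psi1F yf zf df (n - (q:ℤ) * r) =
    (if n = 0 then 1 else 0) - (if n = (p:ℤ) * q * r then 1 else 0) := by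
  obtain ⟨hx0, hxp, hy0, hyq, hz0, hzr, he⟩ := H.hrep n
  rcases eq_or_lt_of_le hx0 with hx | hx
  · have h2 : IsRep p q r (n - (q:ℤ) * r) ((p:ℤ) - 1) (yf n) (zf n) (df n - 1) :=
      ⟨by linarith [H.hp'], by linarith, hy0, hyq, hz0, hzr, by linear_combination he - ((q:ℤ)*r) * hx⟩
    obtain ⟨_, hy2, hz2, hd2⟩ := H.rep_eq h2
    have H0 : n = 0 ↔ (yf n = 0 ∧ zf n = 0 ∧ df n = 0) := by
      constructor
      · intro h
        subst h
        exact H.rep_zero.2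
      · rintro ⟨h1, h2, h3⟩
        rw [← hx] at he
        rw [h1, h2, h3] at he
        linear_combination he
    have H1 : n = (p:ℤ) * q * r ↔ (yf n = 0 ∧ zf n = 0 ∧ df n = 1) := by
      constructor
      · intro h
        subst h
        exact H.rep_pqr.2
      · rintro ⟨h1, h2, h3⟩
        rw [← hx] at he
        rw [h1, h2, h3] at he
        linear_combination he
    unfold psi1F
    rw [hy2, hz2, hd2]
    simp only [H0, H1]
    split_ifs <;> omega
  · have h2 : IsRep p q r (n - (q:ℤ) * r) (xf n - 1) (yf n) (zf n) (df n) :=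
      ⟨by linarith, by linarith, hy0, hyq, hz0, hzr, by linear_combination he⟩
    obtain ⟨_, hy2, hz2, hd2⟩ := H.rep_eq h2
    have H0 : n ≠ 0 := by
      intro h
      subst h
      have := H.rep_zero.1
      omega
    have H1 : n ≠ (p:ℤ) * q * r := by
      intro h
      subst h
      have := H.rep_pqr.1
      omega
    unfold psi1F
    rw [hy2, hz2, hd2]
    simp only [H0, H1, if_neg]
    split_ifs <;> omega

lemma eF_dvd (n : ℤ) (h : eF zf df n ≠ 0) : (r:ℤ) ∣ n := by
  obtain ⟨hx0, hxp, hy0, hyq, hz0, hzr, he⟩ := H.hrep n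
  unfold eF at h
  split_ifs at h with hc
  · obtain ⟨hz, hd⟩ := hc
    exact ⟨xf n * q + yf n * p, by rw [hz, hd] at he; linear_combination he⟩
  · exact absurd rfl h

lemma eF_eq_chi (n : ℤ) (hdvd : (r:ℤ) ∣ n) (hn : n < (p:ℤ) * q * r)
    (hrpq : Nat.Coprime r (p * q)) : eF zf df n = chi p q r n := by
  obtain ⟨hx0, hxp, hy0, hyq, hz0, hzr, he⟩ := H.hrep n
  have hd0 : df n ≤ 0 := H.df_le_zero n hn
  have hz : df n = 0 → zf n = 0 := by
    intro h0
    obtain ⟨c, hc⟩ := hdvd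
    have hdz : (r:ℤ) ∣ zf n * ((p:ℤ) * q) :=
      ⟨c - xf n * q - yf n * p, by linear_combination hc - he - ((p:ℤ)*q*r) * h0⟩
    have crpq : IsCoprime (r:ℤ) ((p:ℤ) * q) := by
      have := Nat.isCoprime_iff_coprime.mpr hrpq
      push_cast at this
      exact this
    have := crpq.dvd_of_dvd_mul_right hdz
    have := Int.eq_zero_of_abs_lt_dvd this (abs_lt.mpr ⟨by linarith, by linarith⟩)
    omega
  rw [H.chi_eq]
  unfold eF
  split_ifs <;> omega

end RepSys


lemma psMulSub (u : ℤ → ℤ) (hu : ∀ n : ℤ, n < 0 → u n = 0) (t : ℕ) :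
    (PowerSeries.mk fun n : ℕ => u n) * (1 - PowerSeries.X ^ t) =
      PowerSeries.mk fun n : ℕ => u n - u ((n : ℤ) - t) := by
  ext n
  simp only [mul_sub, mul_one, map_sub, PowerSeries.coeff_mk, PowerSeries.coeff_mul_X_pow']
  split_ifs with h
  · have hc : ((n - t : ℕ) : ℤ) = (n:ℤ) - t := by omega
    rw [hc]
  · have ht : ((n:ℤ) - t) < 0 := by
      have : n < t := Nat.lt_of_not_le h
      have : (n:ℤ) < (t:ℤ) := by exact_mod_cast this
      linarith
    rw [hu _ ht]

lemma psCoeffMulGeom (u : ℤ → ℤ) (hu : ∀ n : ℤ, n < 0 → u n = 0) (r : ℕ) (m : ℕ) :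
    PowerSeries.coeff m ((PowerSeries.mk fun n : ℕ => u n) *
      ∑ i ∈ Finset.range r, PowerSeries.X ^ i) = ∑ j ∈ Finset.range r, u ((m : ℤ) - j) := by
  rw [Finset.mul_sum, map_sum]
  refine Finset.sum_congr rfl fun j hj => ?_
  rw [PowerSeries.coeff_mul_X_pow']
  split_ifs with h
  · rw [PowerSeries.coeff_mk]
    have hc : ((m - j : ℕ) : ℤ) = (m:ℤ) - j := by omega
    rw [hc]
  · have ht : ((m:ℤ) - j) < 0 := by
      have : m < j := Nat.lt_of_not_le h
      have : (m:ℤ) < (j:ℤ) := by exact_mod_cast this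
      linarith
    rw [hu _ ht]

lemma coeff_formula {p q r : ℕ} {xf yf zf df : ℤ → ℤ} (H : RepSys p q r xf yf zf df)
    (Q : Polynomial ℤ) (hQ : Q * incexcD p q r = incexcN p q r) (m : ℕ) :
    Q.coeff m = ∑ j ∈ Finset.range r,
      (chiHatF df ((m:ℤ) - j) - chiHatF df ((m:ℤ) - j - p) -
        (chiHatF df ((m:ℤ) - j - q) - chiHatF df ((m:ℤ) - j - q - p))) := by
  classical
  have hneg : ∀ n : ℤ, n < 0 → chiHatF df n = 0 := fun n hn => by
    unfold chiHatF; rw [if_neg (H.df_neg n hn)]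
  have hneg2 : ∀ n : ℤ, n < 0 → psi2F zf df n = 0 := fun n hn => by
    unfold psi2F
    rw [if_neg]
    rintro ⟨-, hd⟩
    exact H.df_neg n hn hd
  have hneg1 : ∀ n : ℤ, n < 0 → psi1F yf zf df n = 0 := fun n hn => by
    unfold psi1F
    rw [if_neg]
    rintro ⟨-, -, hd⟩
    exact H.df_neg n hn (le_of_eq hd.symm)
  set S : PowerSeries ℤ := PowerSeries.mk fun n : ℕ => chiHatF df n with hS
  set Xs : PowerSeries ℤ := PowerSeries.X with hXs
  -- step 1 : the key identity
  have e1 : S * (1 - Xs ^ (p*q)) = PowerSeries.mk fun n : ℕ => psi2F zf df n := by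
    rw [hS, hXs, psMulSub _ hneg (p*q)]
    ext n
    rw [PowerSeries.coeff_mk, PowerSeries.coeff_mk]
    have harg : ((n:ℤ) - ((p*q : ℕ) : ℤ)) = (n:ℤ) - (p:ℤ)*q := by push_cast; ring
    rw [harg]
    exact H.L1 n
  have e2 : (PowerSeries.mk fun n : ℕ => psi2F zf df n) * (1 - Xs ^ (r*p)) =
      PowerSeries.mk fun n : ℕ => psi1F yf zf df n := by
    rw [hXs, psMulSub _ hneg2 (r*p)]
    ext n
    rw [PowerSeries.coeff_mk, PowerSeries.coeff_mk]
    have harg : ((n:ℤ) - ((r*p : ℕ) : ℤ)) = (n:ℤ) - (r:ℤ)*p := by push_cast; ring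
    rw [harg]
    exact H.L2 n
  have e3 : (PowerSeries.mk fun n : ℕ => psi1F yf zf df n) * (1 - Xs ^ (q*r)) =
      PowerSeries.mk fun n : ℕ =>
        (if (n:ℤ) = 0 then (1:ℤ) else 0) - (if (n:ℤ) = (p:ℤ)*q*r then 1 else 0) := by
    rw [hXs, psMulSub _ hneg1 (q*r)]
    ext n
    rw [PowerSeries.coeff_mk, PowerSeries.coeff_mk]
    have harg : ((n:ℤ) - ((q*r : ℕ) : ℤ)) = (n:ℤ) - (q:ℤ)*r := by push_cast; ring
    rw [harg]
    exact H.L3 n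
  have e4 : (PowerSeries.mk fun n : ℕ =>
        (if (n:ℤ) = 0 then (1:ℤ) else 0) - (if (n:ℤ) = (p:ℤ)*q*r then 1 else 0)) =
      1 - Xs ^ (p*q*r) := by
    ext n
    rw [PowerSeries.coeff_mk, map_sub, PowerSeries.coeff_one, hXs, PowerSeries.coeff_X_pow]
    have c1 : ((n:ℤ) = 0) ↔ (n = 0) := by exact_mod_cast Int.natCast_eq_zero
    have c2 : ((n:ℤ) = (p:ℤ)*q*r) ↔ (n = p*q*r) := by
      rw [show ((p:ℤ)*q*r) = ((p*q*r : ℕ) : ℤ) from by push_cast; ring]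
      exact Nat.cast_inj
    simp only [c1, c2]
  have hKey : S * ((1 - Xs^(p*q)) * ((1 - Xs^(r*p)) * (1 - Xs^(q*r)))) = 1 - Xs^(p*q*r) := by
    calc S * ((1 - Xs^(p*q)) * ((1 - Xs^(r*p)) * (1 - Xs^(q*r))))
        = ((S * (1 - Xs^(p*q))) * (1 - Xs^(r*p))) * (1 - Xs^(q*r)) := by ring
      _ = 1 - Xs^(p*q*r) := by rw [e1, e2, e3, e4]
  have hG : (∑ i ∈ Finset.range r, Xs^i) * (1 - Xs) = 1 - Xs^r := by
    have h := geom_sum_mul Xs r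
    linear_combination -h
  -- step 2 : from the polynomial identity
  have hps : ((Q : Polynomial ℤ) : PowerSeries ℤ) * ((incexcD p q r : Polynomial ℤ) : PowerSeries ℤ)
      = ((incexcN p q r : Polynomial ℤ) : PowerSeries ℤ) := by
    rw [← Polynomial.coe_mul, hQ]
  have hD : ((incexcD p q r : Polynomial ℤ) : PowerSeries ℤ) =
      (Xs^(p*q) - 1) * (Xs^(q*r) - 1) * (Xs^(r*p) - 1) * (Xs - 1) := by
    unfold incexcD
    rw [hXs]
    push_cast
    ring
  have hN : ((incexcN p q r : Polynomial ℤ) : PowerSeries ℤ) =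
      (Xs^(p*q*r) - 1) * (Xs^p - 1) * (Xs^q - 1) * (Xs^r - 1) := by
    unfold incexcN
    rw [hXs]
    push_cast
    ring
  rw [hD, hN] at hps
  set A : PowerSeries ℤ := S * ((1 - Xs^p) * ((1 - Xs^q) * ∑ i ∈ Finset.range r, Xs^i)) with hA
  have hAD : A * ((Xs^(p*q) - 1) * (Xs^(q*r) - 1) * (Xs^(r*p) - 1) * (Xs - 1)) =
      (Xs^(p*q*r) - 1) * (Xs^p - 1) * (Xs^q - 1) * (Xs^r - 1) := by
    have rearr : A * ((Xs^(p*q) - 1) * (Xs^(q*r) - 1) * (Xs^(r*p) - 1) * (Xs - 1)) =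
        (S * ((1 - Xs^(p*q)) * ((1 - Xs^(r*p)) * (1 - Xs^(q*r))))) *
          ((1 - Xs^p) * ((1 - Xs^q) * ((∑ i ∈ Finset.range r, Xs^i) * (1 - Xs)))) := by
      rw [hA]; ring
    rw [rearr, hKey, hG]
    ring
  have hpq0 : p * q ≠ 0 := Nat.mul_ne_zero H.hp.ne' H.hq.ne'
  have hqr0 : q * r ≠ 0 := Nat.mul_ne_zero H.hq.ne' H.hr.ne'
  have hrp0 : r * p ≠ 0 := Nat.mul_ne_zero H.hr.ne' H.hp.ne'
  have hunit : IsUnit ((Xs^(p*q) - 1) * (Xs^(q*r) - 1) * (Xs^(r*p) - 1) * (Xs - 1)) := by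
    rw [PowerSeries.isUnit_iff_constantCoeff]
    rw [hXs]
    simp [zero_pow, hpq0, hqr0, hrp0]
  have hQA : ((Q : Polynomial ℤ) : PowerSeries ℤ) = A :=
    hunit.mul_right_cancel (by rw [hps, hAD])
  -- step 3 : extract the coefficient
  have hc : Q.coeff m = PowerSeries.coeff m ((Q : Polynomial ℤ) : PowerSeries ℤ) :=
    (Q.coeff_coe m).symm
  rw [hc, hQA]
  have e5 : S * (1 - Xs^p) = PowerSeries.mk
      fun n : ℕ => chiHatF df n - chiHatF df ((n:ℤ) - p) := by
    rw [hS, hXs, psMulSub _ hneg p]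
  have hu1neg : ∀ n : ℤ, n < 0 → chiHatF df n - chiHatF df (n - (p:ℤ)) = 0 := by
    intro n hn
    rw [hneg n hn, hneg _ (by have := H.hp; omega : n - (p:ℤ) < 0)]
    ring
  have e6 : (PowerSeries.mk fun n : ℕ => chiHatF df n - chiHatF df ((n:ℤ) - p)) * (1 - Xs^q) =
      PowerSeries.mk fun n : ℕ =>
        (chiHatF df n - chiHatF df ((n:ℤ) - p)) -
          (chiHatF df ((n:ℤ) - q) - chiHatF df ((n:ℤ) - q - p)) := by
    rw [hXs, psMulSub _ hu1neg q]
  have hu2neg : ∀ n : ℤ, n < 0 →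
      (chiHatF df n - chiHatF df (n - (p:ℤ))) -
        (chiHatF df (n - (q:ℤ)) - chiHatF df (n - (q:ℤ) - p)) = 0 := by
    intro n hn
    have h1 := hu1neg n hn
    have h2 := hu1neg (n - (q:ℤ)) (by have := H.hq; omega)
    linarith [h1, h2]
  have rearr2 : A = ((S * (1 - Xs^p)) * (1 - Xs^q)) * ∑ i ∈ Finset.range r, Xs^i := by
    rw [hA]; ring
  rw [rearr2, e5, e6, hXs]
  rw [psCoeffMulGeom _ hu2neg r m]

lemma sum_window (u : ℤ → ℤ) (A B : ℕ) (b : ℤ) :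
    ∑ k ∈ Finset.range A, (u (b - k) - u (b - B - k)) =
      ∑ k ∈ Finset.range B, (u (b - k) - u (b - A - k)) := by
  have key : ∀ (C D : ℕ) (c : ℤ), ∑ k ∈ Finset.range (C + D), u (c - k) =
      (∑ k ∈ Finset.range C, u (c - k)) + ∑ k ∈ Finset.range D, u (c - C - k) := by
    intro C D c
    rw [Finset.sum_range_add]
    congr 1
    refine Finset.sum_congr rfl fun k _ => ?_
    congr 1
    push_cast
    ring
  have kAB := key A B b
  have kBA := key B A b
  rw [Nat.add_comm B A] at kBA
  rw [Finset.sum_sub_distrib, Finset.sum_sub_distrib]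
  linarith [kAB, kBA]

lemma master {p q s : ℕ} {xf yf zf df : ℤ → ℤ}
    (H : RepSys p q (p*q+s) xf yf zf df)
    (Q : Polynomial ℤ) (hQ : Q * incexcD p q (p*q+s) = incexcN p q (p*q+s))
    (m : ℤ) (hm : m < (p : ℤ) * q * (p * q + s)) :
    coeffZ Q m = SigmaOne p q (p*q+s) s m
      + (∑ k ∈ Finset.range p, eF zf df (m - s - k))
      - ∑ k ∈ Finset.range p, eF zf df (m - s - q - k) := by
  classical
  set r : ℕ := p*q+s with hrdef
  have hrc : ((r:ℕ) : ℤ) = (p:ℤ)*q + s := by rw [hrdef]; push_cast; ring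
  have hm' : m < (p:ℤ) * q * r := by rw [hrc]; exact hm
  have hchineg : ∀ n : ℤ, n < 0 → chi p q r n = 0 := fun n hn => by
    rw [H.chi_eq n, if_neg (H.df_neg n hn)]
  have heneg : ∀ n : ℤ, n < 0 → eF zf df n = 0 := fun n hn => by
    unfold eF
    rw [if_neg]
    rintro ⟨-, hd⟩
    exact H.df_neg n hn (le_of_eq hd.symm)
  rcases lt_or_ge m 0 with hm0 | hm0
  · -- m < 0 : everything vanishes
    have h1 : coeffZ Q m = 0 := if_neg (by omega)
    have hsig : ∀ a : ℤ, a ≤ m → sigmaSum p q r s a = 0 := by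
      intro a ha
      refine Finset.sum_eq_zero fun i _ => hchineg _ (by have : (0:ℤ) ≤ i := Int.natCast_nonneg i; omega)
    have hS1 : SigmaOne p q r s m = 0 := by
      unfold SigmaOne
      rw [hsig m le_rfl, hsig (m - p) (by have : (0:ℤ) ≤ p := Int.natCast_nonneg p; omega),
        hsig (m - q) (by have : (0:ℤ) ≤ q := Int.natCast_nonneg q; omega),
        hsig (m - q - p) (by have : (0:ℤ) ≤ p := Int.natCast_nonneg p
                             have : (0:ℤ) ≤ q := Int.natCast_nonneg q; omega)]
      ring
    have hE1 : (∑ k ∈ Finset.range p, eF zf df (m - s - k)) = 0 :=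
      Finset.sum_eq_zero fun k _ => heneg _ (by
        have : (0:ℤ) ≤ k := Int.natCast_nonneg k
        have : (0:ℤ) ≤ s := Int.natCast_nonneg s
        omega)
    have hE2 : (∑ k ∈ Finset.range p, eF zf df (m - s - q - k)) = 0 :=
      Finset.sum_eq_zero fun k _ => heneg _ (by
        have : (0:ℤ) ≤ k := Int.natCast_nonneg k
        have : (0:ℤ) ≤ s := Int.natCast_nonneg s
        have : (0:ℤ) ≤ q := Int.natCast_nonneg q
        omega)
    rw [h1, hS1, hE1, hE2]
    ring
  · -- m ≥ 0
    have hmt : ((m.toNat : ℕ) : ℤ) = m := Int.toNat_of_nonneg hm0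
    have h1 : coeffZ Q m = Q.coeff m.toNat := if_pos hm0
    rw [h1, coeff_formula H Q hQ m.toNat]
    -- replace chiHat by chi
    have hconv : ∀ j : ℕ,
        (chiHatF df ((m.toNat:ℤ) - j) - chiHatF df ((m.toNat:ℤ) - j - p) -
          (chiHatF df ((m.toNat:ℤ) - j - q) - chiHatF df ((m.toNat:ℤ) - j - q - p)))
        = (chi p q r (m - j) - chi p q r (m - j - p) -
            (chi p q r (m - j - q) - chi p q r (m - j - q - p))) := by
      intro j
      have hj : (0:ℤ) ≤ j := Int.natCast_nonneg j
      have hpj : (0:ℤ) ≤ p := Int.natCast_nonneg p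
      have hqj : (0:ℤ) ≤ q := Int.natCast_nonneg q
      rw [hmt]
      rw [H.chiHat_eq_chi (m - j) (by omega),
        H.chiHat_eq_chi (m - j - p) (by omega),
        H.chiHat_eq_chi (m - j - q) (by omega),
        H.chiHat_eq_chi (m - j - q - p) (by omega)]
    rw [Finset.sum_congr rfl fun j _ => hconv j]
    -- split the range
    have hsplit : r = s + p * q := by omega
    rw [show Finset.range r = Finset.range (s + p*q) by rw [hsplit], Finset.sum_range_add]
    -- first part is SigmaOne
    have hfirst : (∑ j ∈ Finset.range s,
        (chi p q r (m - j) - chi p q r (m - j - p) -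
          (chi p q r (m - j - q) - chi p q r (m - j - q - p))))
        = SigmaOne p q r s m := by
      unfold SigmaOne sigmaSum
      rw [Finset.sum_sub_distrib, Finset.sum_sub_distrib, Finset.sum_sub_distrib]
      have a1 : ∀ i : ℕ, chi p q r (m - i - p) = chi p q r (m - (p:ℤ) - i) := by
        intro i; congr 1; ring
      have a2 : ∀ i : ℕ, chi p q r (m - i - q) = chi p q r (m - (q:ℤ) - i) := by
        intro i; congr 1; ring
      have a3 : ∀ i : ℕ, chi p q r (m - i - q - p) = chi p q r (m - (q:ℤ) - (p:ℤ) - i) := by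
        intro i; congr 1; ring
      rw [Finset.sum_congr rfl fun i _ => a1 i, Finset.sum_congr rfl fun i _ => a2 i,
        Finset.sum_congr rfl fun i _ => a3 i]
      ring
    rw [hfirst]
    -- second part
    have hsecond : (∑ k ∈ Finset.range (p*q),
        (chi p q r (m - (s + k : ℕ)) - chi p q r (m - (s + k : ℕ) - p) -
          (chi p q r (m - (s + k : ℕ) - q) - chi p q r (m - (s + k : ℕ) - q - p))))
        = (∑ k ∈ Finset.range p, eF zf df (m - s - k))
          - ∑ k ∈ Finset.range p, eF zf df (m - s - q - k) := by
      have hred : ∀ k : ℕ, (chi p q r (m - (s + k : ℕ)) - chi p q r (m - (s + k : ℕ) - p) -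
          (chi p q r (m - (s + k : ℕ) - q) - chi p q r (m - (s + k : ℕ) - q - p)))
          = ((chi p q r (m - (s:ℤ) - k) - chi p q r (m - (s:ℤ) - (p:ℤ) - k)) -
             (chi p q r (m - (s:ℤ) - (q:ℤ) - k) - chi p q r (m - (s:ℤ) - (q:ℤ) - (p:ℤ) - k))) := by
        intro k
        have b1 : m - ((s + k : ℕ) : ℤ) = m - (s:ℤ) - k := by push_cast; ring
        have b2 : m - ((s + k : ℕ) : ℤ) - p = m - (s:ℤ) - (p:ℤ) - k := by push_cast; ring
        have b3 : m - ((s + k : ℕ) : ℤ) - q = m - (s:ℤ) - (q:ℤ) - k := by push_cast; ring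
        have b4 : m - ((s + k : ℕ) : ℤ) - q - p = m - (s:ℤ) - (q:ℤ) - (p:ℤ) - k := by push_cast; ring
        rw [b4, b3, b2, b1]
      rw [Finset.sum_congr rfl fun k _ => hred k]
      rw [Finset.sum_sub_distrib]
      rw [sum_window (chi p q r) (p*q) p (m - (s:ℤ)),
        sum_window (chi p q r) (p*q) p (m - (s:ℤ) - (q:ℤ))]
      have c1 : ∀ k : ℕ, chi p q r (m - (s:ℤ) - k) - chi p q r (m - (s:ℤ) - ((p*q : ℕ):ℤ) - k)
          = eF zf df (m - (s:ℤ) - k) := by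
        intro k
        have : m - (s:ℤ) - ((p*q : ℕ):ℤ) - k = (m - (s:ℤ) - k) - (p:ℤ)*q := by push_cast; ring
        rw [this]
        exact H.L0 (m - (s:ℤ) - k)
      have c2 : ∀ k : ℕ, chi p q r (m - (s:ℤ) - (q:ℤ) - k) -
          chi p q r (m - (s:ℤ) - (q:ℤ) - ((p*q : ℕ):ℤ) - k)
          = eF zf df (m - (s:ℤ) - (q:ℤ) - k) := by
        intro k
        have : m - (s:ℤ) - (q:ℤ) - ((p*q : ℕ):ℤ) - k = (m - (s:ℤ) - (q:ℤ) - k) - (p:ℤ)*q := by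
          push_cast; ring
        rw [this]
        exact H.L0 (m - (s:ℤ) - (q:ℤ) - k)
      rw [Finset.sum_congr rfl fun k _ => c1 k, Finset.sum_congr rfl fun k _ => c2 k]
    rw [hsecond]
    ring


theorem stmt_16 (p q s : ℕ) (hp : 3 ≤ p) (hpq' : p < q) (hs : 1 ≤ s)
    (hpq : Nat.Coprime p q) (hspq : Nat.Coprime s (p * q))
    (Q : Polynomial ℤ)
    (hQ : Q * incexcD p q (p * q + s) = incexcN p q (p * q + s))
    (m : ℤ) (hm : m < (p : ℤ) * q * (p * q + s)) :
    (∀ n₁ n₂ : ℤ,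
      ((m - s - q - p < n₁ ∧ n₁ ≤ m - s - q) ∨ (m - s - p < n₁ ∧ n₁ ≤ m - s)) →
      ((m - s - q - p < n₂ ∧ n₂ ≤ m - s - q) ∨ (m - s - p < n₂ ∧ n₂ ≤ m - s)) →
      ((p : ℤ) * q + s) ∣ n₁ → ((p : ℤ) * q + s) ∣ n₂ → n₁ = n₂) ∧
    ((¬ ∃ n : ℤ,
        ((m - s - q - p < n ∧ n ≤ m - s - q) ∨ (m - s - p < n ∧ n ≤ m - s)) ∧
        ((p : ℤ) * q + s) ∣ n) →
      coeffZ Q m = SigmaOne p q (p * q + s) s m) ∧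
    (∀ α : ℤ,
      (m - s - q - p < α * ((p : ℤ) * q + s) ∧ α * ((p : ℤ) * q + s) ≤ m - s - q) →
      coeffZ Q m = SigmaOne p q (p * q + s) s m -
        chi p q (p * q + s) (α * ((p : ℤ) * q + s))) ∧
    (∀ α : ℤ,
      (m - s - p < α * ((p : ℤ) * q + s) ∧ α * ((p : ℤ) * q + s) ≤ m - s) →
      coeffZ Q m = SigmaOne p q (p * q + s) s m +
        chi p q (p * q + s) (α * ((p : ℤ) * q + s))) := by
  classical
  -- basic positivity and coprimality facts
  have hp0 : 0 < p := by omega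
  have hq0 : 0 < q := by omega
  have hr0 : 0 < p * q + s := by positivity
  have hps : Nat.Coprime p s := ((hspq.coprime_dvd_right ⟨q, rfl⟩).symm)
  have hqs : Nat.Coprime q s := ((hspq.coprime_dvd_right ⟨p, Nat.mul_comm p q⟩).symm)
  have hpr : Nat.Coprime p (p * q + s) := by
    rw [Nat.add_comm]
    exact (Nat.coprime_add_mul_left_right p s q).mpr hps
  have hqr : Nat.Coprime q (p * q + s) := by
    rw [Nat.add_comm, Nat.mul_comm]
    exact (Nat.coprime_add_mul_left_right q s p).mpr hqs
  have hrpq : Nat.Coprime (p * q + s) (p * q) := by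
    rw [Nat.add_comm]
    simpa using (Nat.coprime_add_mul_right_left s (p * q) 1).mpr hspq
  -- the representation system
  have hex : ∀ n : ℤ, ∃ x y z δ : ℤ, IsRep p q (p * q + s) n x y z δ :=
    exists_isRep hp0 hq0 hr0 hpq hpr hqr
  choose xf yf zf df hrep using hex
  have H : RepSys p q (p * q + s) xf yf zf df := ⟨hp0, hq0, hr0, hpq, hpr, hqr, hrep⟩
  have hM := master H Q hQ m hm
  have hcast : (((p * q + s : ℕ)) : ℤ) = (p : ℤ) * q + s := by push_cast; ring
  have hpq_lin : (p : ℤ) + q + 1 ≤ (p : ℤ) * q := by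
    have h2 : (2 : ℤ) ≤ (p : ℤ) - 1 := by
      have : (3 : ℤ) ≤ p := by exact_mod_cast hp
      omega
    have h3 : (3 : ℤ) ≤ (q : ℤ) - 1 := by
      have : (p : ℤ) < q := by exact_mod_cast hpq'
      have : (3 : ℤ) ≤ p := by exact_mod_cast hp
      omega
    nlinarith [h2, h3]
  have hq' : (p : ℤ) < q := by exact_mod_cast hpq'
  -- part 1 : uniqueness of the multiple of r in the union of the two intervals
  have huniq : ∀ n₁ n₂ : ℤ,
      ((m - s - q - p < n₁ ∧ n₁ ≤ m - s - q) ∨ (m - s - p < n₁ ∧ n₁ ≤ m - s)) →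
      ((m - s - q - p < n₂ ∧ n₂ ≤ m - s - q) ∨ (m - s - p < n₂ ∧ n₂ ≤ m - s)) →
      ((p : ℤ) * q + s) ∣ n₁ → ((p : ℤ) * q + s) ∣ n₂ → n₁ = n₂ := by
    intro n₁ n₂ h1 h2 d1 d2
    have u1 : m - s - q - p < n₁ ∧ n₁ ≤ m - s := by
      rcases h1 with h | h <;> omega
    have u2 : m - s - q - p < n₂ ∧ n₂ ≤ m - s := by
      rcases h2 with h | h <;> omega
    have hd : ((p : ℤ) * q + s) ∣ (n₁ - n₂) := dvd_sub d1 d2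
    have hs0 : (0 : ℤ) ≤ s := Int.natCast_nonneg s
    have := Int.eq_zero_of_abs_lt_dvd hd
      (abs_lt.mpr ⟨by linarith [u1.1, u2.2], by linarith [u1.2, u2.1]⟩)
    omega
  refine ⟨huniq, ?_, ?_, ?_⟩
  -- some helpers for the three computational cases
  all_goals
    have hedvd : ∀ n : ℤ, eF zf df n ≠ 0 → ((p : ℤ) * q + s) ∣ n := by
      intro n hn
      have := H.eF_dvd n hn
      rwa [hcast] at this
  · -- no multiple of r
    intro hno
    have hz1 : ∀ k ∈ Finset.range p, eF zf df (m - s - k) = 0 := by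
      intro k hk
      by_contra hne
      rw [Finset.mem_range] at hk
      have hk' : (k : ℤ) < p := by exact_mod_cast hk
      exact hno ⟨m - s - k, Or.inr ⟨by omega, by omega⟩, hedvd _ hne⟩
    have hz2 : ∀ k ∈ Finset.range p, eF zf df (m - s - q - k) = 0 := by
      intro k hk
      by_contra hne
      rw [Finset.mem_range] at hk
      have hk' : (k : ℤ) < p := by exact_mod_cast hk
      exact hno ⟨m - s - q - k, Or.inl ⟨by omega, by omega⟩, hedvd _ hne⟩
    rw [hM, Finset.sum_eq_zero hz1, Finset.sum_eq_zero hz2]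
    ring
  · -- a multiple of r in I₁'
    intro α hα
    obtain ⟨ha1, ha2⟩ := hα
    have hdvd0 : ((p : ℤ) * q + s) ∣ α * ((p : ℤ) * q + s) := dvd_mul_left _ α
    have hz1 : ∀ k ∈ Finset.range p, eF zf df (m - s - k) = 0 := by
      intro k hk
      by_contra hne
      rw [Finset.mem_range] at hk
      have hk' : (k : ℤ) < p := by exact_mod_cast hk
      have := huniq (m - s - k) (α * ((p : ℤ) * q + s))
        (Or.inr ⟨by omega, by omega⟩) (Or.inl ⟨ha1, ha2⟩) (hedvd _ hne) hdvd0
      omega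
    obtain ⟨k0, hk0p, hk0e⟩ : ∃ k0 : ℕ, k0 < p ∧ m - s - q - (k0 : ℤ) = α * ((p : ℤ) * q + s) :=
      ⟨(m - s - q - α * ((p : ℤ) * q + s)).toNat, by omega, by omega⟩
    have hz2 : (∑ k ∈ Finset.range p, eF zf df (m - s - q - k)) =
        eF zf df (m - s - q - (k0 : ℤ)) := by
      refine Finset.sum_eq_single_of_mem k0 (Finset.mem_range.mpr hk0p) ?_
      intro b hb hbne
      by_contra hne
      rw [Finset.mem_range] at hb
      have hb' : (b : ℤ) < p := by exact_mod_cast hb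
      have := huniq (m - s - q - b) (α * ((p : ℤ) * q + s))
        (Or.inl ⟨by omega, by omega⟩) (Or.inl ⟨ha1, ha2⟩) (hedvd _ hne) hdvd0
      omega
    have hchi : eF zf df (m - s - q - (k0 : ℤ)) = chi p q (p * q + s) (α * ((p : ℤ) * q + s)) := by
      rw [hk0e]
      refine H.eF_eq_chi _ (by rw [hcast]; exact hdvd0) ?_ hrpq
      have hs0 : (0 : ℤ) ≤ s := Int.natCast_nonneg s
      have hq0' : (0 : ℤ) ≤ q := Int.natCast_nonneg q
      rw [hcast]
      linarith [ha2, hm]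
    rw [hM, Finset.sum_eq_zero hz1, hz2, hchi]
    ring
  · -- a multiple of r in I₂'
    intro α hα
    obtain ⟨ha1, ha2⟩ := hα
    have hdvd0 : ((p : ℤ) * q + s) ∣ α * ((p : ℤ) * q + s) := dvd_mul_left _ α
    have hz2 : ∀ k ∈ Finset.range p, eF zf df (m - s - q - k) = 0 := by
      intro k hk
      by_contra hne
      rw [Finset.mem_range] at hk
      have hk' : (k : ℤ) < p := by exact_mod_cast hk
      have := huniq (m - s - q - k) (α * ((p : ℤ) * q + s))
        (Or.inl ⟨by omega, by omega⟩) (Or.inr ⟨ha1, ha2⟩) (hedvd _ hne) hdvd0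
      omega
    obtain ⟨k0, hk0p, hk0e⟩ : ∃ k0 : ℕ, k0 < p ∧ m - s - (k0 : ℤ) = α * ((p : ℤ) * q + s) :=
      ⟨(m - s - α * ((p : ℤ) * q + s)).toNat, by omega, by omega⟩
    have hz1 : (∑ k ∈ Finset.range p, eF zf df (m - s - k)) =
        eF zf df (m - s - (k0 : ℤ)) := by
      refine Finset.sum_eq_single_of_mem k0 (Finset.mem_range.mpr hk0p) ?_
      intro b hb hbne
      by_contra hne
      rw [Finset.mem_range] at hb
      have hb' : (b : ℤ) < p := by exact_mod_cast hb
      have := huniq (m - s - b) (α * ((p : ℤ) * q + s))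
        (Or.inr ⟨by omega, by omega⟩) (Or.inr ⟨ha1, ha2⟩) (hedvd _ hne) hdvd0
      omega
    have hchi : eF zf df (m - s - (k0 : ℤ)) = chi p q (p * q + s) (α * ((p : ℤ) * q + s)) := by
      rw [hk0e]
      refine H.eF_eq_chi _ (by rw [hcast]; exact hdvd0) ?_ hrpq
      have hs0 : (0 : ℤ) ≤ s := Int.natCast_nonneg s
      rw [hcast]
      linarith [ha2, hm]
    rw [hM, hz1, hchi, Finset.sum_eq_zero hz2]
    ring
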